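/- If A is a Schur stable n×n matrix (all eigenvalues have absolute value strictly less than 1), Σζ solves the Lyapunov equation A Σζ Aᵀ − Σζ + B = 0, and Σ satisfies the Lyapunov inequality A Σ Aᵀ − Σ + B ⪯ 0 (both Σ, Σζ symmetric), then Σ ⪰ Σζ. -/

import Mathlib

open Matrix Filter Topology
open scoped ENNReal NNReal

section Aux

attribute [local instance] Matrix.linftyOpNormedAddCommGroup Matrix.linftyOpNormedRing
  Matrix.linftyOpNormedAlgebra

/-- Powers of a Schur stable real matrix tend to zero entrywise. -/
lemma entry_pow_tendsto_zero {n : ℕ} (A : Matrix (Fin n) (Fin n) ℝ)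
    (hA : ∀ μ ∈ spectrum ℂ (A.map (Complex.ofReal)), ‖μ‖ < 1) (i j : Fin n) :
    Tendsto (fun m : ℕ => (A ^ m) i j) atTop (𝓝 0) := by
  haveI : Nonempty (Fin n) := ⟨i⟩
  set Ac : Matrix (Fin n) (Fin n) ℂ := A.map Complex.ofReal with hAc
  have hsr : spectralRadius ℂ Ac < 1 := by
    have := spectrum.spectralRadius_lt_of_forall_lt Ac (r := 1)
      (fun z hz => by rw [← NNReal.coe_lt_coe]; simpa using hA z hz)
    simpa using this
  obtain ⟨r, hr1, hr2⟩ := ENNReal.lt_iff_exists_nnreal_btwn.mp hsr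
  have hrlt : r < 1 := by exact_mod_cast hr2
  have hev : ∀ᶠ m : ℕ in atTop, (‖Ac ^ m‖₊ : ℝ≥0∞) ^ (1 / (m : ℝ)) < (r : ℝ≥0∞) :=
    (spectrum.pow_nnnorm_pow_one_div_tendsto_nhds_spectralRadius Ac).eventually_lt_const hr1
  have hbound : ∀ᶠ m : ℕ in atTop, ‖(A ^ m) i j‖ ≤ (r : ℝ) ^ m := by
    filter_upwards [hev, eventually_ge_atTop 1] with m hm hm1
    have hmR : (0 : ℝ) < (m : ℝ) := by exact_mod_cast hm1
    have h1 : (‖Ac ^ m‖₊ : ℝ≥0∞) < (r : ℝ≥0∞) ^ (m : ℝ) := by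
      have := ENNReal.rpow_lt_rpow hm hmR
      rwa [← ENNReal.rpow_mul, one_div_mul_cancel hmR.ne', ENNReal.rpow_one] at this
    have h2 : ‖Ac ^ m‖₊ < r ^ m := by
      rw [ENNReal.rpow_natCast, ← ENNReal.coe_pow, ENNReal.coe_lt_coe] at h1
      exact h1
    have h3 : ‖(Ac ^ m) i j‖₊ ≤ ‖Ac ^ m‖₊ := by
      rw [Matrix.linfty_opNNNorm_def]
      exact le_trans
        (Finset.single_le_sum (f := fun k => ‖(Ac ^ m) i k‖₊) (fun _ _ => zero_le)
          (Finset.mem_univ j))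
        (Finset.le_sup (f := fun i => ∑ k, ‖(Ac ^ m) i k‖₊) (Finset.mem_univ i))
    have hmap : Ac ^ m = (A ^ m).map Complex.ofReal := by
      have := map_pow (Complex.ofRealHom.mapMatrix (m := Fin n)) A m
      simp only [RingHom.mapMatrix_apply] at this; exact this.symm
    have h4 : ‖(A ^ m) i j‖ = ‖(Ac ^ m) i j‖ := by
      rw [hmap]; simp [Matrix.map_apply]
    calc ‖(A ^ m) i j‖ = ‖(Ac ^ m) i j‖ := h4
      _ ≤ ‖Ac ^ m‖ := by exact_mod_cast h3
      _ ≤ (r : ℝ) ^ m := by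
          rw [← coe_nnnorm]
          exact_mod_cast h2.le.trans_eq (by simp)
  exact squeeze_zero_norm' hbound (tendsto_pow_atTop_nhds_zero_of_lt_one r.coe_nonneg
    (by exact_mod_cast hrlt))

end Aux

/-- If `A` is Schur stable, `Sζ` solves the Lyapunov equation `A Sζ Aᵀ − Sζ + B = 0`,
and `S` satisfies the Lyapunov inequality `A S Aᵀ − S + B ⪯ 0` (both symmetric),
then `S ⪰ Sζ`. -/
theorem stmt_1 {n : ℕ} (A B Sζ S : Matrix (Fin n) (Fin n) ℝ)
    (hA : ∀ μ ∈ spectrum ℂ (A.map (Complex.ofReal)), ‖μ‖ < 1)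
    (hB : B.IsHermitian) (hSζ : Sζ.IsHermitian) (hS : S.IsHermitian)
    (heq : A * Sζ * Aᵀ - Sζ + B = 0)
    (hineq : (-(A * S * Aᵀ - S + B)).PosSemidef) :
    (S - Sζ).PosSemidef := by
  set D := S - Sζ with hD
  -- D - A D Aᵀ is PSD
  have hC : (D - A * D * Aᵀ).PosSemidef := by
    have h' : A * Sζ * Aᵀ = Sζ - B := by
      rw [sub_add] at heq
      exact sub_eq_zero.mp heq
    have hrw : D - A * D * Aᵀ = -(A * S * Aᵀ - S + B) := by
      simp only [hD, sub_mul, mul_sub, h']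
      abel
    rw [hrw]; exact hineq
  -- induction: D - A^m D (A^m)ᵀ is PSD
  have hind : ∀ m : ℕ, (D - A ^ m * D * (A ^ m)ᵀ).PosSemidef := by
    intro m
    induction m with
    | zero => simpa using Matrix.PosSemidef.zero
    | succ m ih =>
      have hrw : D - A ^ (m + 1) * D * (A ^ (m + 1))ᵀ =
          (D - A * D * Aᵀ) + A * (D - A ^ m * D * (A ^ m)ᵀ) * Aᵀ := by
        rw [pow_succ']
        simp only [Matrix.transpose_mul]
        noncomm_ring
      rw [hrw]
      have := ih.mul_mul_conjTranspose_same A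
      rw [Matrix.conjTranspose_eq_transpose_of_trivial] at this
      exact hC.add this
  refine Matrix.PosSemidef.of_dotProduct_mulVec_nonneg (hS.sub hSζ) fun x => ?_
  -- the quadratic form along powers tends to zero
  have hTend : Tendsto (fun m : ℕ => A ^ m) atTop (𝓝 (0 : Matrix (Fin n) (Fin n) ℝ)) := by
    refine tendsto_pi_nhds.mpr ?_
    intro i
    rw [tendsto_pi_nhds]
    intro j
    simpa using entry_pow_tendsto_zero A hA i j
  have hcont : Continuous fun M : Matrix (Fin n) (Fin n) ℝ =>
      dotProduct (star x) ((M * D * Mᵀ) *ᵥ x) :=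
    (continuous_const.dotProduct
      (((continuous_id.matrix_mul continuous_const).matrix_mul
        continuous_id.matrix_transpose).matrix_mulVec continuous_const))
  have hg : Tendsto (fun m : ℕ => dotProduct (star x) ((A ^ m * D * (A ^ m)ᵀ) *ᵥ x))
      atTop (𝓝 0) := by
    have h := (hcont.tendsto (0 : Matrix (Fin n) (Fin n) ℝ)).comp hTend
    simp only [Function.comp_def] at h
    simpa using h
  refine le_of_tendsto' hg fun m => ?_
  have h0 := (hind m).dotProduct_mulVec_nonneg x
  simp only [Matrix.sub_mulVec, dotProduct_sub] at h0
  linarith
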